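/- Let (ρ_k) be a sequence of irreducible unitary representations of a compact semi-simple Lie group K with dim V_k → ∞, and let γ be an abstractly hermitian element of the completed enveloping algebra such that ‖ρ̃_{*,k}(r_{ρ_k}(γ))·t‖ → 0 in operator norm for every t > 0. Then for every t > 0, the nearest neighbor statistics μ_{exp(ρ_{*,k}(r_{ρ_k}(γ)) t)} of the unitary matrices exp(i·(rescaled operator)·t) do not converge (weakly) to any Borel measure μ on ℝ_{≥0} with μ([0, 1/(2π)]) < 1. -/

import Mathlib

open MeasureTheory
open scoped ENNReal BoundedContinuousFunction

/-- Wrapped nearest neighbor statistics of the (sorted) eigenangles `x 0 ≤ … ≤ x (N-1)`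
in `[0,1)`: `(1/N)[δ(N(1 - x_N + x_1)) + ∑_{j=1}^{N-1} δ(N(x_{j+1} - x_j))]`. -/
noncomputable def wrappedNN (N : ℕ) (x : ℕ → ℝ) : Measure ℝ :=
  (N : ℝ≥0∞)⁻¹ • (Measure.dirac ((N : ℝ) * (1 - x (N - 1) + x 0)) +
    ∑ j ∈ Finset.range (N - 1), Measure.dirac ((N : ℝ) * (x (j + 1) - x j)))

/-- The non-decreasing rearrangement of a finite tuple, as a function on `ℕ`. -/
noncomputable def sortTuple (N : ℕ) (φ : Fin N → ℝ) : ℕ → ℝ :=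
  fun j => if h : j < N then (φ ∘ Tuple.sort φ) ⟨j, h⟩ else 0

/-- The wrapped nearest neighbor statistics of the unitary matrix `exp(2πi·H·t)`, for a
hermitian `N × N` matrix `H`: the eigenangles (normalized to `[0,1)`) are the fractional
parts of `t·(eigenvalues of H)`. -/
noncomputable def expNN (N : ℕ) {H : Matrix (Fin N) (Fin N) ℂ} (hH : H.IsHermitian)
    (t : ℝ) : Measure ℝ :=
  wrappedNN N (sortTuple N fun i => Int.fract (t * hH.eigenvalues i))

/-- If `|y| ≤ d` then the fractional part of `y` is within `d` of `0` or of `1`. -/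
private lemma fract_cluster {y d : ℝ} (h : |y| ≤ d) :
    Int.fract y ≤ d ∨ 1 - d ≤ Int.fract y := by
  rcases le_or_gt (Int.fract y) d with h1 | h1
  · exact Or.inl h1
  · right
    have hy : y ≤ d := (le_abs_self y).trans h
    have hy' : -d ≤ y := neg_le_of_abs_le h
    have hf : Int.fract y = y - ⌊y⌋ := (Int.self_sub_floor y).symm
    have hfl : (⌊y⌋ : ℝ) < 0 := by
      by_contra hge
      push_neg at hge
      have : Int.fract y ≤ y := by rw [hf]; linarith
      linarith
    have : ⌊y⌋ ≤ -1 := by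
      have : ⌊y⌋ < 0 := by exact_mod_cast hfl
      omega
    have : (⌊y⌋ : ℝ) ≤ -1 := by exact_mod_cast this
    rw [hf]; linarith

/-- The key combinatorial estimate: if the sorted values `x 0 ≤ … ≤ x (N-1)` all lie in
`[0, d] ∪ [1 - d, 1)`, then for any `F ≤ 1` with `1 - F y ≤ y / η` for `y ≥ 0`, the sum of
`1 - F` over the rescaled gaps is at most `1 + 2 N d / η`. -/
private lemma gap_sum_bound (N : ℕ) (hN : 2 ≤ N) (x : ℕ → ℝ) (d η : ℝ)
    (hd : 0 ≤ d) (hη : 0 < η)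
    (mono : ∀ j, j + 1 < N → x j ≤ x (j + 1))
    (h0 : ∀ j, j < N → 0 ≤ x j) (h1 : ∀ j, j < N → x j < 1)
    (htri : ∀ j, j < N → x j ≤ d ∨ 1 - d ≤ x j)
    (F : ℝ → ℝ) (hF0 : ∀ y, 0 ≤ F y) (hF1 : ∀ y, F y ≤ 1)
    (hF2 : ∀ y, 0 ≤ y → 1 - F y ≤ y / η) :
    ∑ j ∈ Finset.range (N - 1), (1 - F ((N : ℝ) * (x (j + 1) - x j)))
      ≤ 1 + 2 * N * d / η := by
  have hNpos : (0 : ℝ) < N := by positivity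
  have hmono' : ∀ j ∈ Finset.range (N - 1), x j ≤ x (j + 1) := by
    intro j hj
    exact mono j (by have := Finset.mem_range.1 hj; omega)
  have hterm : ∀ j ∈ Finset.range (N - 1),
      1 - F ((N : ℝ) * (x (j + 1) - x j)) ≤ (N : ℝ) * (x (j + 1) - x j) / η := by
    intro j hj
    exact hF2 _ (by nlinarith [hmono' j hj])
  have htel : ∑ j ∈ Finset.range (N - 1), (x (j + 1) - x j) = x (N - 1) - x 0 :=
    Finset.sum_range_sub x (N - 1)
  have hx01 : 0 ≤ x 0 := h0 0 (by omega)
  have hxN : x (N - 1) < 1 := h1 (N - 1) (by omega)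
  by_cases hc : ∃ j, j < N - 1 ∧ x j ≤ d ∧ d < x (j + 1)
  · obtain ⟨j0, hj0, hxj0, hxj0'⟩ := hc
    have hj0m : j0 ∈ Finset.range (N - 1) := Finset.mem_range.2 hj0
    have hbig : 1 - d ≤ x (j0 + 1) := by
      rcases htri (j0 + 1) (by omega) with h | h
      · linarith
      · exact h
    rw [← Finset.sum_erase_add _ _ hj0m]
    have hrest : ∑ j ∈ (Finset.range (N - 1)).erase j0,
        (1 - F ((N : ℝ) * (x (j + 1) - x j)))
        ≤ ∑ j ∈ (Finset.range (N - 1)).erase j0, (N : ℝ) * (x (j + 1) - x j) / η :=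
      Finset.sum_le_sum fun j hj => hterm j (Finset.mem_of_mem_erase hj)
    have hsum : ∑ j ∈ (Finset.range (N - 1)).erase j0, (N : ℝ) * (x (j + 1) - x j) / η
        = (N : ℝ) * (∑ j ∈ (Finset.range (N - 1)).erase j0, (x (j + 1) - x j)) / η := by
      rw [Finset.mul_sum, Finset.sum_div]
    have hsub : ∑ j ∈ (Finset.range (N - 1)).erase j0, (x (j + 1) - x j)
        = (x (N - 1) - x 0) - (x (j0 + 1) - x j0) := by
      rw [Finset.sum_erase_eq_sub hj0m, htel]
    have h2d : ∑ j ∈ (Finset.range (N - 1)).erase j0, (x (j + 1) - x j) ≤ 2 * d := by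
      rw [hsub]; linarith
    have hlast : 1 - F ((N : ℝ) * (x (j0 + 1) - x j0)) ≤ 1 := by
      have := hF0 ((N : ℝ) * (x (j0 + 1) - x j0)); linarith
    have : (N : ℝ) * (∑ j ∈ (Finset.range (N - 1)).erase j0, (x (j + 1) - x j)) / η
        ≤ (N : ℝ) * (2 * d) / η := by
      apply div_le_div_of_nonneg_right _ hη.le
      nlinarith
    calc ∑ j ∈ (Finset.range (N - 1)).erase j0, (1 - F ((N : ℝ) * (x (j + 1) - x j)))
          + (1 - F ((N : ℝ) * (x (j0 + 1) - x j0)))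
        ≤ (N : ℝ) * (2 * d) / η + 1 := by
          have := hrest.trans (hsum ▸ this)
          linarith
      _ = 1 + 2 * N * d / η := by ring
  · push_neg at hc
    have hsmall : x (N - 1) - x 0 ≤ d := by
      rcases le_or_gt (x 0) d with h | h
      · have hall : ∀ j, j ≤ N - 1 → x j ≤ d := by
          intro j
          induction j with
          | zero => intro _; exact h
          | succ n ih => intro hn; exact hc n (by omega) (ih (by omega))
        have := hall (N - 1) le_rfl
        linarith
      · have : 1 - d ≤ x 0 := by
          rcases htri 0 (by omega) with h' | h'
          · linarith
          · exact h'
        have hx0N : x 0 ≤ x (N - 1) ∨ x 0 = x (N - 1) := by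
          rcases Nat.eq_or_lt_of_le (show 1 ≤ N - 1 by omega) with h'' | h''
          · left
            have : ∀ j, j ≤ N - 1 → x 0 ≤ x j := by
              intro j
              induction j with
              | zero => intro _; exact le_rfl
              | succ n ih =>
                intro hn
                exact (ih (by omega)).trans (mono n (by omega))
            exact this (N - 1) le_rfl
          · left
            have : ∀ j, j ≤ N - 1 → x 0 ≤ x j := by
              intro j
              induction j with
              | zero => intro _; exact le_rfl
              | succ n ih =>
                intro hn
                exact (ih (by omega)).trans (mono n (by omega))
            exact this (N - 1) le_rfl
        linarith
    calc ∑ j ∈ Finset.range (N - 1), (1 - F ((N : ℝ) * (x (j + 1) - x j)))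
        ≤ ∑ j ∈ Finset.range (N - 1), (N : ℝ) * (x (j + 1) - x j) / η :=
          Finset.sum_le_sum hterm
      _ = (N : ℝ) * (x (N - 1) - x 0) / η := by
          rw [← htel, Finset.mul_sum, Finset.sum_div]
      _ ≤ (N : ℝ) * d / η := by
          apply div_le_div_of_nonneg_right _ hη.le
          nlinarith
      _ ≤ 1 + 2 * N * d / η := by
          have h1' : 0 ≤ (N : ℝ) * d / η := by positivity
          have : (N : ℝ) * d / η ≤ 2 * N * d / η := by
            apply div_le_div_of_nonneg_right _ hη.le
            nlinarith
          linarith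

private lemma integral_wrappedNN (N : ℕ) (x : ℕ → ℝ) (F : ℝ →ᵇ ℝ) :
    ∫ y, F y ∂(wrappedNN N x) =
      (N : ℝ)⁻¹ * (F ((N : ℝ) * (1 - x (N - 1) + x 0)) +
        ∑ j ∈ Finset.range (N - 1), F ((N : ℝ) * (x (j + 1) - x j))) := by
  rw [wrappedNN, integral_smul_measure, integral_add_measure (F.integrable _)
    (F.integrable _), integral_finset_sum_measure (fun j _ => F.integrable _)]
  simp [integral_dirac, smul_eq_mul]

theorem no_convergence_after_rescaling (N : ℕ → ℕ) (hN2 : ∀ k, 2 ≤ N k)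
    (hNtop : Filter.Tendsto N Filter.atTop Filter.atTop)
    (H : ∀ k, Matrix (Fin (N k)) (Fin (N k)) ℂ) (hH : ∀ k, (H k).IsHermitian)
    (hnorm : ∀ t : ℝ, 0 < t →
      Filter.Tendsto (fun k => t * (⨆ i, |(hH k).eigenvalues i|)) Filter.atTop (nhds 0)) :
    ∀ t : ℝ, 0 < t → ∀ μ : Measure ℝ, IsFiniteMeasure μ →
      μ (Set.Iio (0 : ℝ)) = 0 → μ (Set.Icc (0 : ℝ) (1 / (2 * Real.pi))) < 1 →
      ¬ (∀ f : ℝ →ᵇ ℝ,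
          Filter.Tendsto (fun k => ∫ y, f y ∂(expNN (N k) (hH k) t))
            Filter.atTop (nhds (∫ y, f y ∂μ))) := by
  intro t ht μ hμfin hμneg hμlt hconv
  set c : ℝ := 1 / (2 * Real.pi) with hc
  have hcpos : 0 < c := by
    rw [hc]; positivity
  -- choose η > 0 with μ (Icc 0 (c + η)) < 1
  obtain ⟨η, hηpos, hημ⟩ : ∃ η : ℝ, 0 < η ∧ μ (Set.Icc 0 (c + η)) < 1 := by
    have hinter : ⋂ n : ℕ, Set.Icc (0 : ℝ) (c + 1 / (n + 1)) = Set.Icc 0 c := by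
      ext y
      simp only [Set.mem_iInter, Set.mem_Icc]
      constructor
      · intro h
        refine ⟨(h 0).1, ?_⟩
        by_contra hy
        push_neg at hy
        obtain ⟨n, hn⟩ := exists_nat_one_div_lt (sub_pos.2 hy)
        have := (h n).2
        linarith
      · intro h n
        have : (0 : ℝ) < 1 / (n + 1) := by positivity
        exact ⟨h.1, by linarith [h.2]⟩
    have hanti : Antitone fun n : ℕ => Set.Icc (0 : ℝ) (c + 1 / (n + 1)) := by
      intro m n hmn
      apply Set.Icc_subset_Icc le_rfl
      have : (1 : ℝ) / (n + 1) ≤ 1 / (m + 1) := by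
        apply one_div_le_one_div_of_le (by positivity)
        exact_mod_cast Nat.add_le_add_right hmn 1
      linarith
    have htend := tendsto_measure_iInter_atTop
      (μ := μ) (fun n => (measurableSet_Icc).nullMeasurableSet) hanti
      ⟨0, measure_ne_top μ _⟩
    rw [hinter] at htend
    have := htend.eventually_lt_const hμlt
    obtain ⟨n, hn⟩ := this.exists
    exact ⟨1 / (n + 1), by positivity, hn⟩
  -- the test function
  set g : ℝ → ℝ := fun y => max 0 (min 1 ((c + η - y) / η)) with hg
  have hgcont : Continuous g := by
    apply continuous_const.max
    exact continuous_const.min ((continuous_const.sub continuous_id).div_const η)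
  have hg01 : ∀ y, 0 ≤ g y ∧ g y ≤ 1 := by
    intro y
    refine ⟨le_max_left _ _, max_le (by norm_num) (min_le_left _ _)⟩
  have hgbd : ∀ y : ℝ, ‖g y‖ ≤ 1 := by
    intro y
    rw [Real.norm_eq_abs, abs_le]
    exact ⟨by linarith [(hg01 y).1], (hg01 y).2⟩
  set F : ℝ →ᵇ ℝ := BoundedContinuousFunction.ofNormedAddCommGroup g hgcont 1 hgbd with hF
  have hFapp : ∀ y, F y = g y := fun y => rfl
  have hFle : ∀ y, y ≤ c → F y = 1 := by
    intro y hy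
    simp only [hFapp, hg]
    have h1 : (1 : ℝ) ≤ (c + η - y) / η := by
      rw [le_div_iff₀ hηpos]
      linarith
    rw [min_eq_left h1, max_eq_right (by norm_num)]
  have hFlin : ∀ y : ℝ, 0 ≤ y → 1 - F y ≤ y / η := by
    intro y hy
    simp only [hFapp, hg]
    rcases le_or_gt (1 - y / η) 0 with h | h
    · have := le_max_left (0:ℝ) (min 1 ((c + η - y) / η))
      linarith
    · have h1 : 1 - y / η ≤ min 1 ((c + η - y) / η) := by
        apply le_min
        · have : 0 ≤ y / η := by positivity
          linarith
        · rw [le_div_iff₀ hηpos, sub_mul, div_mul_cancel₀ _ hηpos.ne']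
          linarith
      have h2 : min 1 ((c + η - y) / η) ≤ max 0 (min 1 ((c + η - y) / η)) :=
        le_max_right _ _
      linarith
  -- upper bound for ∫ F dμ
  have hint_upper : ∫ y, F y ∂μ < 1 := by
    have hle : ENNReal.ofReal (∫ y, F y ∂μ) ≤ μ (Set.Iic (c + η)) := by
      apply integral_le_measure (s := Set.Iic (c + η))
      · intro y _; exact (hg01 y).2
      · intro y hy
        simp only [Set.mem_compl_iff, Set.mem_Iic, not_le] at hy
        simp only [hFapp, hg]
        have h1 : (c + η - y) / η < 0 := by
          apply div_neg_of_neg_of_pos _ hηpos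
          linarith
        rw [min_eq_right (by linarith), max_eq_left (by linarith)]
    have hIic : μ (Set.Iic (c + η)) = μ (Set.Icc 0 (c + η)) := by
      have : Set.Iic (c + η) = Set.Iio 0 ∪ Set.Icc 0 (c + η) := by
        ext y
        simp only [Set.mem_Iic, Set.mem_union, Set.mem_Iio, Set.mem_Icc]
        constructor
        · intro h
          rcases lt_or_ge y 0 with h' | h'
          · exact Or.inl h'
          · exact Or.inr ⟨h', h⟩
        · rintro (h | h)
          · linarith
          · exact h.2
      rw [this]
      refine le_antisymm ?_ (measure_mono Set.subset_union_right)
      calc μ (Set.Iio 0 ∪ Set.Icc 0 (c + η)) ≤ μ (Set.Iio 0) + μ (Set.Icc 0 (c + η)) :=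
            measure_union_le _ _
        _ = μ (Set.Icc 0 (c + η)) := by rw [hμneg, zero_add]
    rw [hIic] at hle
    exact ENNReal.ofReal_lt_one.1 (lt_of_le_of_lt hle hημ)
  -- lower bound for ∫ F d(expNN k)
  set a : ℕ → ℝ := fun k => ⨆ i, |(hH k).eigenvalues i| with ha
  have hapos : ∀ k, 0 ≤ a k := by
    intro k
    have : Nonempty (Fin (N k)) := ⟨⟨0, by have := hN2 k; omega⟩⟩
    obtain ⟨i⟩ := this
    exact (abs_nonneg ((hH k).eigenvalues i)).trans
      (le_ciSup (f := fun i => |(hH k).eigenvalues i|)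
        (Set.Finite.bddAbove (Set.finite_range _)) i)
  have hlower : ∀ k, 1 - 2 / (N k : ℝ) - 2 * (t * a k) / η
      ≤ ∫ y, F y ∂(expNN (N k) (hH k) t) := by
    intro k
    have hNk : 2 ≤ N k := hN2 k
    have hNpos : (0 : ℝ) < N k := by positivity
    set x : ℕ → ℝ := sortTuple (N k) (fun i => Int.fract (t * (hH k).eigenvalues i))
      with hx
    have hxval : ∀ j (h : j < N k), x j =
        Int.fract (t * (hH k).eigenvalues
          ((Tuple.sort (fun i => Int.fract (t * (hH k).eigenvalues i))) ⟨j, h⟩)) := by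
      intro j h
      rw [hx, sortTuple]
      simp [h]
    have h0 : ∀ j, j < N k → 0 ≤ x j := by
      intro j h; rw [hxval j h]; exact Int.fract_nonneg _
    have h1 : ∀ j, j < N k → x j < 1 := by
      intro j h; rw [hxval j h]; exact Int.fract_lt_one _
    have htri : ∀ j, j < N k → x j ≤ t * a k ∨ 1 - t * a k ≤ x j := by
      intro j h
      rw [hxval j h]
      apply fract_cluster
      rw [abs_mul, abs_of_pos ht]
      exact mul_le_mul_of_nonneg_left
        (le_ciSup (f := fun i => |(hH k).eigenvalues i|)
          (Set.Finite.bddAbove (Set.finite_range _)) _) ht.le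
    have hmono : ∀ j, j + 1 < N k → x j ≤ x (j + 1) := by
      intro j h
      rw [hxval j (by omega), hxval (j + 1) h]
      exact Tuple.monotone_sort (fun i => Int.fract (t * (hH k).eigenvalues i))
        (a := ⟨j, by omega⟩) (b := ⟨j + 1, h⟩) (Fin.mk_le_mk.2 (Nat.le_succ j))
    have hgap := gap_sum_bound (N k) hNk x (t * a k) η
      (mul_nonneg ht.le (hapos k)) hηpos hmono h0 h1 htri (fun y => F y)
      (fun y => (hg01 y).1) (fun y => (hg01 y).2) hFlin
    have hintF : ∫ y, F y ∂(expNN (N k) (hH k) t) =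
        (N k : ℝ)⁻¹ * (F ((N k : ℝ) * (1 - x (N k - 1) + x 0)) +
          ∑ j ∈ Finset.range (N k - 1), F ((N k : ℝ) * (x (j + 1) - x j))) := by
      rw [expNN, ← hx]
      exact integral_wrappedNN (N k) x F
    rw [hintF]
    have hsumF : ∑ j ∈ Finset.range (N k - 1), F ((N k : ℝ) * (x (j + 1) - x j))
        = (N k - 1 : ℝ) -
          ∑ j ∈ Finset.range (N k - 1), (1 - F ((N k : ℝ) * (x (j + 1) - x j))) := by
      rw [Finset.sum_sub_distrib]
      simp [Nat.cast_sub (by omega : 1 ≤ N k)]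
    have hwrap : 0 ≤ F ((N k : ℝ) * (1 - x (N k - 1) + x 0)) := (hg01 _).1
    have key : (N k - 1 : ℝ) - (1 + 2 * (N k) * (t * a k) / η)
        ≤ F ((N k : ℝ) * (1 - x (N k - 1) + x 0)) +
          ∑ j ∈ Finset.range (N k - 1), F ((N k : ℝ) * (x (j + 1) - x j)) := by
      rw [hsumF]
      linarith
    calc 1 - 2 / (N k : ℝ) - 2 * (t * a k) / η
        = (N k : ℝ)⁻¹ * ((N k - 1 : ℝ) - (1 + 2 * (N k) * (t * a k) / η)) := by
          field_simp
          ring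
      _ ≤ _ := by
          apply mul_le_mul_of_nonneg_left key
          positivity
  -- take limits
  have hblim : Filter.Tendsto (fun k => 1 - 2 / (N k : ℝ) - 2 * (t * a k) / η)
      Filter.atTop (nhds 1) := by
    have h1 : Filter.Tendsto (fun k => 2 / (N k : ℝ)) Filter.atTop (nhds 0) := by
      have : Filter.Tendsto (fun k => (N k : ℝ)) Filter.atTop Filter.atTop :=
        tendsto_natCast_atTop_atTop.comp hNtop
      simpa [div_eq_mul_inv] using this.inv_tendsto_atTop.const_mul 2
    have h2 : Filter.Tendsto (fun k => 2 * (t * a k) / η) Filter.atTop (nhds 0) := by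
      have := (hnorm t ht).const_mul 2
      simpa using (this.div_const η)
    have := ((tendsto_const_nhds (x := (1:ℝ))).sub h1).sub h2
    simpa using this
  have hle : 1 ≤ ∫ y, F y ∂μ :=
    le_of_tendsto_of_tendsto' hblim (hconv F) hlower
  linarith
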